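/- If (w*,t*) realizes the spherical cap discrepancy, i.e. Δ = |μ_emp(w*,t*) − μ_cap(w*,t*)| with Δ the supremum of local discrepancies, then there exists an index i ∈ {1,...,N} with ⟨w*,x^i⟩ = t*; that is, the discrepancy-realizing cap contains at least one sample point on its relative boundary. -/

import Mathlib

open scoped Classical BigOperators

noncomputable def muEmp {n N : ℕ} (x : Fin N → (Fin n → ℝ)) (w : Fin n → ℝ) (t : ℝ) : ℝ :=
  (Finset.univ.filter fun i => t ≤ ∑ j, w j * x i j).card / N

noncomputable def muCap (n : ℕ) (t : ℝ) : ℝ :=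
  if 0 ≤ t then
    (∫ τ in (0:ℝ)..Real.pi, Real.sin τ ^ (n - 2))⁻¹ * ∫ τ in (0:ℝ)..Real.arccos t, Real.sin τ ^ (n - 2)
  else
    1 - (∫ τ in (0:ℝ)..Real.pi, Real.sin τ ^ (n - 2))⁻¹ * ∫ τ in (0:ℝ)..Real.arccos (-t), Real.sin τ ^ (n - 2)

noncomputable def locDisc {n N : ℕ} (x : Fin N → (Fin n → ℝ)) (w : Fin n → ℝ) (t : ℝ) : ℝ :=
  |muEmp x w t - muCap n t|

noncomputable def capDisc {n N : ℕ} (x : Fin N → (Fin n → ℝ)) : ℝ :=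
  sSup {d : ℝ | ∃ w t, (∑ j, w j ^ 2 = 1) ∧ t ∈ Set.Icc (-1:ℝ) 1 ∧ d = locDisc x w t}

/- auxiliary lemmas -/

lemma sinpow_intable (k : ℕ) (a b : ℝ) :
    IntervalIntegrable (fun τ => Real.sin τ ^ k) MeasureTheory.volume a b :=
  (Real.continuous_sin.pow k).intervalIntegrable a b

lemma sinpow_C_pos (k : ℕ) : 0 < ∫ τ in (0:ℝ)..Real.pi, Real.sin τ ^ k :=
  intervalIntegral.intervalIntegral_pos_of_pos_on (sinpow_intable k 0 Real.pi)
    (fun τ hτ => pow_pos (Real.sin_pos_of_pos_of_lt_pi hτ.1 hτ.2) k) Real.pi_pos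

lemma sinpow_I_mono (k : ℕ) {a b : ℝ} (h0 : 0 ≤ a) (hab : a < b) (hb : b ≤ Real.pi) :
    (∫ τ in (0:ℝ)..a, Real.sin τ ^ k) < ∫ τ in (0:ℝ)..b, Real.sin τ ^ k := by
  have hadd := intervalIntegral.integral_add_adjacent_intervals
    (sinpow_intable k 0 a) (sinpow_intable k a b)
  have hpos : 0 < ∫ τ in a..b, Real.sin τ ^ k :=
    intervalIntegral.intervalIntegral_pos_of_pos_on (sinpow_intable k a b)
      (fun τ hτ => pow_pos (Real.sin_pos_of_pos_of_lt_pi (lt_of_le_of_lt h0 hτ.1)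
        (lt_of_lt_of_le hτ.2 hb)) k) hab
  linarith

lemma sinpow_I_nonneg (k : ℕ) {a : ℝ} (h0 : 0 ≤ a) (ha : a ≤ Real.pi) :
    0 ≤ ∫ τ in (0:ℝ)..a, Real.sin τ ^ k := by
  rcases eq_or_lt_of_le h0 with h | h
  · simp [← h]
  · exact le_of_lt (by simpa using sinpow_I_mono k le_rfl h ha)

lemma sinpow_I_le_C (k : ℕ) {a : ℝ} (h0 : 0 ≤ a) (ha : a ≤ Real.pi) :
    (∫ τ in (0:ℝ)..a, Real.sin τ ^ k) ≤ ∫ τ in (0:ℝ)..Real.pi, Real.sin τ ^ k := by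
  rcases eq_or_lt_of_le ha with h | h
  · rw [h]
  · exact le_of_lt (sinpow_I_mono k h0 h le_rfl)

lemma muCap_eq (n : ℕ) {t : ℝ} (ht : t ∈ Set.Icc (-1:ℝ) 1) :
    muCap n t = (∫ τ in (0:ℝ)..Real.pi, Real.sin τ ^ (n - 2))⁻¹ *
      ∫ τ in (0:ℝ)..Real.arccos t, Real.sin τ ^ (n - 2) := by
  unfold muCap
  by_cases h : 0 ≤ t
  · rw [if_pos h]
  · rw [if_neg h]
    have h1 : Real.arccos (-t) = Real.pi - Real.arccos t := Real.arccos_neg t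
    have h2 : (∫ τ in (0:ℝ)..(Real.pi - Real.arccos t), Real.sin τ ^ (n-2)) =
        ∫ τ in Real.arccos t..Real.pi, Real.sin τ ^ (n-2) := by
      have h3 : (∫ τ in (0:ℝ)..(Real.pi - Real.arccos t), Real.sin τ ^ (n-2)) =
          ∫ τ in (0:ℝ)..(Real.pi - Real.arccos t), Real.sin (Real.pi - τ) ^ (n-2) := by
        simp [Real.sin_pi_sub]
      rw [h3, intervalIntegral.integral_comp_sub_left (fun τ => Real.sin τ ^ (n-2)) Real.pi]
      norm_num
    have hadd := intervalIntegral.integral_add_adjacent_intervals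
      (sinpow_intable (n-2) 0 (Real.arccos t)) (sinpow_intable (n-2) (Real.arccos t) Real.pi)
    have hC := sinpow_C_pos (n-2)
    rw [h1, h2]
    field_simp
    linarith

lemma muCap_anti (n : ℕ) {t1 t2 : ℝ} (h1 : -1 ≤ t1) (h12 : t1 < t2) (h2 : t2 ≤ 1) :
    muCap n t2 < muCap n t1 := by
  rw [muCap_eq n ⟨h1, by linarith⟩, muCap_eq n ⟨by linarith, h2⟩]
  have ha : Real.arccos t2 < Real.arccos t1 :=
    Real.strictAntiOn_arccos ⟨h1, by linarith⟩ ⟨by linarith, h2⟩ h12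
  exact mul_lt_mul_of_pos_left
    (sinpow_I_mono (n-2) (Real.arccos_nonneg t2) ha (Real.arccos_le_pi t1))
    (inv_pos.2 (sinpow_C_pos _))

lemma muCap_mem (n : ℕ) {t : ℝ} (ht : t ∈ Set.Icc (-1:ℝ) 1) :
    muCap n t ∈ Set.Icc (0:ℝ) 1 := by
  rw [muCap_eq n ht]
  have hC := sinpow_C_pos (n-2)
  have h0 := sinpow_I_nonneg (n-2) (Real.arccos_nonneg t) (Real.arccos_le_pi t)
  have h1 := sinpow_I_le_C (n-2) (Real.arccos_nonneg t) (Real.arccos_le_pi t)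
  constructor
  · positivity
  · rw [inv_mul_le_iff₀ hC]; linarith

lemma muEmp_mem {n N : ℕ} (hN : 0 < N) (x : Fin N → (Fin n → ℝ)) (w : Fin n → ℝ) (t : ℝ) :
    muEmp x w t ∈ Set.Icc (0:ℝ) 1 := by
  unfold muEmp
  have hNpos : (0:ℝ) < N := Nat.cast_pos.mpr hN
  constructor
  · positivity
  · rw [div_le_one hNpos]
    exact_mod_cast (Finset.card_filter_le _ _).trans (by simp)

lemma locDisc_le_capDisc {n N : ℕ} (hN : 0 < N) (x : Fin N → (Fin n → ℝ))
    (w : Fin n → ℝ) (hw : ∑ j, w j ^ 2 = 1) {t : ℝ} (ht : t ∈ Set.Icc (-1:ℝ) 1) :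
    locDisc x w t ≤ capDisc x := by
  apply le_csSup
  · refine ⟨1, fun d hd => ?_⟩
    obtain ⟨w', t', hw', ht', rfl⟩ := hd
    have h1 := muEmp_mem hN x w' t'
    have h2 := muCap_mem n ht'
    unfold locDisc
    rw [abs_sub_le_iff]
    constructor <;> [linarith [h1.2, h2.1]; linarith [h1.1, h2.2]]
  · exact ⟨w, t, hw, ht, rfl⟩

theorem statement5 {n N : ℕ} (hn : 2 ≤ n) (hN : 0 < N)
    (x : Fin N → (Fin n → ℝ)) (hx : ∀ i, ∑ j, x i j ^ 2 = 1)
    (w : Fin n → ℝ) (t : ℝ) (hw : ∑ j, w j ^ 2 = 1) (ht : t ∈ Set.Icc (-1:ℝ) 1)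
    (hreal : capDisc x = |muEmp x w t - muCap n t|) :
    ∃ i, ∑ j, w j * x i j = t := by
  by_contra hcon
  push_neg at hcon
  set ip : Fin N → ℝ := fun i => ∑ j, w j * x i j with hip
  -- Cauchy-Schwarz: each ip i lies in [-1,1]
  have hcs : ∀ i, -1 ≤ ip i ∧ ip i ≤ 1 := by
    intro i
    have h := Finset.sum_mul_sq_le_sq_mul_sq Finset.univ w (x i)
    rw [hw, hx i, one_mul] at h
    have h2 : ip i ^ 2 ≤ 1 := h
    exact ⟨by nlinarith [sq_nonneg (ip i + 1)], by nlinarith [sq_nonneg (ip i - 1)]⟩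
  have hNpos : (0:ℝ) < N := Nat.cast_pos.mpr hN
  rcases lt_trichotomy (muEmp x w t - muCap n t) 0 with hlt | heq | hgt
  · -- muEmp < muCap : perturb t downward
    have htgt : -1 < t := by
      rcases eq_or_lt_of_le ht.1 with h | h
      · exfalso
        have hall : (Finset.univ.filter fun i => t ≤ ip i) = Finset.univ := by
          apply Finset.filter_true_of_mem
          intro i _
          rw [← h]; exact (hcs i).1
        have hemp : muEmp x w t = 1 := by
          unfold muEmp
          rw [hall]
          field_simp
          simp
        have hcap : muCap n t = 1 := by
          rw [muCap_eq n ht, ← h]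
          rw [Real.arccos_neg_one]
          field_simp [ne_of_gt (sinpow_C_pos (n-2))]
        rw [hemp, hcap] at hlt
        norm_num at hlt
      · exact h
    set F : Finset ℝ := insert (-1) ((Finset.univ.image ip).filter (· < t)) with hF
    have hFne : F.Nonempty := ⟨-1, Finset.mem_insert_self _ _⟩
    set t' : ℝ := F.max' hFne with ht'
    have ht'lt : t' < t := by
      rw [ht', Finset.max'_lt_iff]
      intro s hs
      rcases Finset.mem_insert.mp hs with h | h
      · rw [h]; exact htgt
      · exact (Finset.mem_filter.mp h).2
    have ht'ge : -1 ≤ t' := Finset.le_max' _ _ (Finset.mem_insert_self _ _)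
    set t'' : ℝ := (t' + t) / 2 with ht''
    have h1 : t' < t'' := by rw [ht'']; linarith
    have h2 : t'' < t := by rw [ht'']; linarith
    have ht''mem : t'' ∈ Set.Icc (-1:ℝ) 1 := ⟨by linarith, by linarith [ht.2]⟩
    -- muEmp unchanged
    have hemp : muEmp x w t'' = muEmp x w t := by
      have hkey : (Finset.univ.filter fun i => t'' ≤ ∑ j, w j * x i j)
          = (Finset.univ.filter fun i => t ≤ ∑ j, w j * x i j) := by
        apply Finset.filter_congr
        intro i _
        show t'' ≤ ip i ↔ t ≤ ip i
        constructor
        · intro hle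
          by_contra hnot
          push_neg at hnot
          have : ip i ∈ F := Finset.mem_insert_of_mem
            (Finset.mem_filter.mpr ⟨Finset.mem_image_of_mem ip (Finset.mem_univ i), hnot⟩)
          have := Finset.le_max' F _ this
          linarith
        · intro hle; linarith
      unfold muEmp
      rw [hkey]
    have hcap : muCap n t < muCap n t'' := muCap_anti n ht''mem.1 h2 ht.2
    have hle := locDisc_le_capDisc hN x w hw ht''mem
    unfold locDisc at hle
    rw [hreal, abs_of_neg hlt, hemp] at hle
    have := neg_le_abs (muEmp x w t - muCap n t'')
    linarith
  · -- capDisc = 0 : contradiction via injectivity of muCap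
    rw [heq, abs_zero] at hreal
    set F : Finset ℝ := insert (-1) ((Finset.univ.image ip).filter (· < 1)) with hF
    have hFne : F.Nonempty := ⟨-1, Finset.mem_insert_self _ _⟩
    set m : ℝ := F.max' hFne with hm
    have hmlt : m < 1 := by
      rw [hm, Finset.max'_lt_iff]
      intro s hs
      rcases Finset.mem_insert.mp hs with h | h
      · rw [h]; norm_num
      · exact (Finset.mem_filter.mp h).2
    have hmge : -1 ≤ m := Finset.le_max' _ _ (Finset.mem_insert_self _ _)
    set t1 : ℝ := m + (1 - m) / 3 with ht1
    set t2 : ℝ := m + 2 * (1 - m) / 3 with ht2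
    have hmt1 : m < t1 := by rw [ht1]; linarith
    have h12 : t1 < t2 := by rw [ht1, ht2]; linarith
    have ht2lt : t2 < 1 := by rw [ht2]; linarith
    have ht1mem : t1 ∈ Set.Icc (-1:ℝ) 1 := ⟨by linarith, by linarith⟩
    have ht2mem : t2 ∈ Set.Icc (-1:ℝ) 1 := ⟨by linarith, by linarith⟩
    have hipkey : ∀ i, (t1 ≤ ip i ↔ t2 ≤ ip i) := by
      intro i
      by_cases h : ip i < 1
      · have : ip i ∈ F := Finset.mem_insert_of_mem
          (Finset.mem_filter.mpr ⟨Finset.mem_image_of_mem ip (Finset.mem_univ i), h⟩)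
        have := Finset.le_max' F _ this
        constructor <;> (intro hh; linarith)
      · push_neg at h
        constructor <;> (intro _; linarith)
    have hemp : muEmp x w t1 = muEmp x w t2 := by
      have hkey : (Finset.univ.filter fun i => t1 ≤ ∑ j, w j * x i j)
          = (Finset.univ.filter fun i => t2 ≤ ∑ j, w j * x i j) := by
        apply Finset.filter_congr
        intro i _
        show t1 ≤ ip i ↔ t2 ≤ ip i
        exact hipkey i
      unfold muEmp
      rw [hkey]
    have hz1 : muEmp x w t1 = muCap n t1 := by
      have hle := locDisc_le_capDisc hN x w hw ht1mem
      rw [hreal] at hle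
      unfold locDisc at hle
      have := abs_nonneg (muEmp x w t1 - muCap n t1)
      have : |muEmp x w t1 - muCap n t1| = 0 := le_antisymm hle this
      have := abs_eq_zero.mp this
      linarith
    have hz2 : muEmp x w t2 = muCap n t2 := by
      have hle := locDisc_le_capDisc hN x w hw ht2mem
      rw [hreal] at hle
      unfold locDisc at hle
      have := abs_nonneg (muEmp x w t2 - muCap n t2)
      have : |muEmp x w t2 - muCap n t2| = 0 := le_antisymm hle this
      have := abs_eq_zero.mp this
      linarith
    have := muCap_anti n ht1mem.1 h12 ht2mem.2
    rw [← hz1, ← hz2, hemp] at this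
    exact lt_irrefl _ this
  · -- muEmp > muCap : perturb t upward
    have htlt : t < 1 := by
      rcases eq_or_lt_of_le ht.2 with h | h
      · exfalso
        have hnone : (Finset.univ.filter fun i => t ≤ ip i) = ∅ := by
          apply Finset.filter_false_of_mem
          intro i _
          push_neg
          rcases lt_or_eq_of_le (hcs i).2 with hh | hh
          · rw [h]; exact hh
          · exact absurd (hh.trans h.symm) (hcon i)
        have hemp : muEmp x w t = 0 := by
          unfold muEmp; rw [hnone]; simp
        have hcap : muCap n t = 0 := by
          rw [muCap_eq n ht, h, Real.arccos_one]
          simp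
        rw [hemp, hcap] at hgt
        norm_num at hgt
      · exact h
    set F : Finset ℝ := insert 1 ((Finset.univ.image ip).filter (t < ·)) with hF
    have hFne : F.Nonempty := ⟨1, Finset.mem_insert_self _ _⟩
    set t' : ℝ := F.min' hFne with ht'
    have ht'gt : t < t' := by
      rw [ht', Finset.lt_min'_iff]
      intro s hs
      rcases Finset.mem_insert.mp hs with h | h
      · rw [h]; exact htlt
      · exact (Finset.mem_filter.mp h).2
    have ht'le : t' ≤ 1 := Finset.min'_le _ _ (Finset.mem_insert_self _ _)
    set t'' : ℝ := (t + t') / 2 with ht''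
    have h1 : t < t'' := by rw [ht'']; linarith
    have h2 : t'' < t' := by rw [ht'']; linarith
    have ht''mem : t'' ∈ Set.Icc (-1:ℝ) 1 := ⟨by linarith [ht.1], by linarith⟩
    have hemp : muEmp x w t'' = muEmp x w t := by
      have hkey : (Finset.univ.filter fun i => t'' ≤ ∑ j, w j * x i j)
          = (Finset.univ.filter fun i => t ≤ ∑ j, w j * x i j) := by
        apply Finset.filter_congr
        intro i _
        show t'' ≤ ip i ↔ t ≤ ip i
        constructor
        · intro hle; linarith
        · intro hle
          have hne := hcon i
          have hlt' : t < ip i := lt_of_le_of_ne hle (Ne.symm hne)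
          have : ip i ∈ F := Finset.mem_insert_of_mem
            (Finset.mem_filter.mpr ⟨Finset.mem_image_of_mem ip (Finset.mem_univ i), hlt'⟩)
          have := Finset.min'_le F _ this
          linarith
      unfold muEmp
      rw [hkey]
    have hcap : muCap n t'' < muCap n t := muCap_anti n ht.1 h1 ht''mem.2
    have hle := locDisc_le_capDisc hN x w hw ht''mem
    unfold locDisc at hle
    rw [hreal, abs_of_pos hgt, hemp] at hle
    have := le_abs_self (muEmp x w t - muCap n t'')
    linarith
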